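/- For every π ∈ S and every s ≥ 1, the Haar measure of F̃_s^π equals 2^{−s}, and consequently μ(F^π) = 0. In particular (taking all π_s to be the identity) μ(F̃_s) = 2^{−s} and μ(F) = 0. -/

import Mathlib

open Filter Finset Topology MeasureTheory
open scoped Classical

noncomputable section

instance : TopologicalSpace (ZMod 2) := ⊥
instance : DiscreteTopology (ZMod 2) := ⟨rfl⟩

/-- The dyadic (Cantor) group `𝔾`: sequences of elements of `ℤ/2ℤ`
with coordinatewise addition modulo 2, Tychonoff topology. -/
abbrev DyadicGroup : Type := ℕ → ZMod 2

instance : MeasurableSpace DyadicGroup := borel _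
instance : BorelSpace DyadicGroup := ⟨rfl⟩

/-- `𝔾^d`. -/
abbrev GD (d : ℕ) : Type := Fin d → DyadicGroup

/-- One-dimensional Walsh function `W_n` in the Paley enumeration:
`W_n(g) = ∏_k (-1)^(g_k n_k)`. -/
def walsh (n : ℕ) (g : DyadicGroup) : ℝ :=
  ∏ k ∈ Finset.range n, if n.testBit k ∧ g k = 1 then (-1 : ℝ) else 1

/-- `d`-dimensional Walsh function `W_𝐧(𝐠) = ∏ W_{n^l}(g^l)`. -/
def walshD {d : ℕ} (n : Fin d → ℕ) (g : GD d) : ℝ :=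
  ∏ l, walsh (n l) (g l)

/-- The dyadic interval `Δ^{(k)}_m` of rank `k`. -/
def dyadicInterval (k m : ℕ) : Set DyadicGroup :=
  {g | ∀ t < k, g t = if m.testBit (k - 1 - t) then 1 else 0}

/-- The dyadic cube `Δ^{(k)}_𝐦 = Δ^{(k)}_{m^1} × ⋯ × Δ^{(k)}_{m^d}`. -/
def dyadicCube {d : ℕ} (k : ℕ) (m : Fin d → ℕ) : Set (GD d) :=
  {g | ∀ l, g l ∈ dyadicInterval k (m l)}

/-- The canonical point of `Δ^{(k)}_m`. -/
def intervalPoint (k m : ℕ) : DyadicGroup :=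
  fun t => if t < k ∧ m.testBit (k - 1 - t) then 1 else 0

/-- The canonical point of `Δ^{(k)}_𝐦`. -/
def cubePoint {d : ℕ} (k : ℕ) (m : Fin d → ℕ) : GD d :=
  fun l => intervalPoint k (m l)

/-- `W^{(k)}_{n,m}`: the (constant, for `n < 2^k`) value of `W_n` on `Δ^{(k)}_m`. -/
def walshVal (k n m : ℕ) : ℝ := walsh n (intervalPoint k m)

/-- `W^{(k)}_{𝐧𝐦}`: the (constant, for `𝐧 < 2^k·𝟏`) value of `W_𝐧` on `Δ^{(k)}_𝐦`. -/
def walshValD {d : ℕ} (k : ℕ) (n m : Fin d → ℕ) : ℝ := walshD n (cubePoint k m)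

/-- The box `{𝐧 : 𝐧 < 𝐍}` as a finset. -/
def boxLt {d : ℕ} (N : Fin d → ℕ) : Finset (Fin d → ℕ) :=
  Fintype.piFinset fun l => Finset.range (N l)

/-- The box `{0,…,2^k−1}^d` as a set. -/
def box (d k : ℕ) : Set (Fin d → ℕ) := {m | ∀ l, m l < 2 ^ k}

/-- The rectangular partial sum `S_𝐍(𝐠)` of the Walsh series with coefficients `a`. -/
def walshPartialSum {d : ℕ} (a : (Fin d → ℕ) → ℂ) (N : Fin d → ℕ) (g : GD d) : ℂ :=
  ∑ n ∈ boxLt N, a n * (walshD n g : ℂ)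

/-- Convergence over rectangles: `S_𝐍(𝐠) → S` as `min_j N^j → ∞`. -/
def ConvergesOverRectangles {d : ℕ} (a : (Fin d → ℕ) → ℂ) (g : GD d) (S : ℂ) : Prop :=
  Tendsto (fun N : Fin d → ℕ => walshPartialSum a N g) atTop (𝓝 S)

/-- Convergence over cubes: `S_{N𝟏}(𝐠) → S` as `N → ∞`. -/
def ConvergesOverCubes {d : ℕ} (a : (Fin d → ℕ) → ℂ) (g : GD d) (S : ℂ) : Prop :=
  Tendsto (fun N : ℕ => walshPartialSum a (fun _ => N) g) atTop (𝓝 S)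

/-- `λ`-convergence: `S_𝐍(𝐠) → S` as `min_j N^j → ∞` along `𝐍` with `max N^j/N^k ≤ λ`. -/
def LambdaConverges {d : ℕ} (lam : ℝ) (a : (Fin d → ℕ) → ℂ) (g : GD d) (S : ℂ) : Prop :=
  ∀ ε : ℝ, 0 < ε → ∃ K : ℕ, ∀ N : Fin d → ℕ, (∀ j, K ≤ N j) →
    (∀ j k, (N j : ℝ) ≤ lam * N k) → ‖walshPartialSum a N g - S‖ < ε

/-- Auxiliary predicate for iterated summation of a multiple series with terms `f`;
the list gives the order of summation, *innermost index first*.  After summing the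
series in the variables of the list, the remaining (partially summed) function is `g`. -/
def IterConvAux {d : ℕ} : List (Fin d) → ((Fin d → ℕ) → ℂ) → ((Fin d → ℕ) → ℂ) → Prop
  | [], f, g => f = g
  | j :: rest, f, g => ∃ h : (Fin d → ℕ) → ℂ,
      (∀ n, Tendsto (fun T : ℕ => ∑ t ∈ Finset.range T, f (Function.update n j t))
        atTop (𝓝 (h n))) ∧ IterConvAux rest h g

/-- The multiple series with terms `f` converges iteratedly to `S`, the order of
summation being given by the list `l` (innermost index first): all successively
nested inner series converge and the full iterated sum equals `S`. -/
def IterConverges {d : ℕ} (l : List (Fin d)) (f : (Fin d → ℕ) → ℂ) (S : ℂ) : Prop :=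
  ∃ g, IterConvAux l f g ∧ ∀ n, g n = S

/-- `A` is an M-set for the `d`-dimensional Walsh system under rectangular convergence. -/
def IsMSetRect {d : ℕ} (A : Set (GD d)) : Prop :=
  ∃ a : (Fin d → ℕ) → ℂ, (∃ n, a n ≠ 0) ∧ ∀ g ∉ A, ConvergesOverRectangles a g 0

/-- `A` is an M-set for the `d`-dimensional Walsh system under convergence over cubes. -/
def IsMSetCubes {d : ℕ} (A : Set (GD d)) : Prop :=
  ∃ a : (Fin d → ℕ) → ℂ, (∃ n, a n ≠ 0) ∧ ∀ g ∉ A, ConvergesOverCubes a g 0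

/-- `A` is an M-set under iterated convergence with summation order `l` (innermost first). -/
def IsMSetIter {d : ℕ} (A : Set (GD d)) (l : List (Fin d)) : Prop :=
  ∃ a : (Fin d → ℕ) → ℂ, (∃ n, a n ≠ 0) ∧
    ∀ g ∉ A, IterConverges l (fun n => a n * (walshD n g : ℂ)) 0

/-- `A` is an M-set for the `d`-dimensional Walsh system under `λ`-convergence. -/
def IsMSetLambda {d : ℕ} (lam : ℝ) (A : Set (GD d)) : Prop :=
  ∃ a : (Fin d → ℕ) → ℂ, (∃ n, a n ≠ 0) ∧ ∀ g ∉ A, LambdaConverges lam a g 0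

/-- A quasimeasure: a finitely additive function on dyadic cubes (indexed by rank
`k` and position `𝐦 < 2^k·𝟏`). -/
def IsQuasimeasure {d : ℕ} (τ : ℕ → (Fin d → ℕ) → ℂ) : Prop :=
  ∀ k m, (∀ l, m l < 2 ^ k) →
    τ k m = ∑ σ : Fin d → Fin 2, τ (k + 1) fun l => 2 * m l + (σ l : ℕ)

/-- The quasimeasure generated by the Walsh series with coefficients `a`:
`τ(Δ^{(k)}_𝐦) = 2^{-kd} ∑_{𝐧<2^k𝟏} a_𝐧 W_𝐧(Δ^{(k)}_𝐦)`. -/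
def genQM {d : ℕ} (a : (Fin d → ℕ) → ℂ) (k : ℕ) (m : Fin d → ℕ) : ℂ :=
  ((2 : ℂ) ^ (k * d))⁻¹ * ∑ n ∈ boxLt (fun _ : Fin d => 2 ^ k), a n * (walshValD k n m : ℂ)

/-- The Fourier–Walsh coefficient `τ̂_𝐧` of a quasimeasure `τ`, computed at resolution `k`
(the value does not depend on `k` as long as `𝐧 < 2^k𝟏`). -/
def fourierCoeffAt {d : ℕ} (τ : ℕ → (Fin d → ℕ) → ℂ) (n : Fin d → ℕ) (k : ℕ) : ℂ :=
  ∑ m ∈ boxLt (fun _ : Fin d => 2 ^ k), (walshValD k n m : ℂ) * τ k m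

/-- The local Fourier–Walsh coefficient `τ̂_𝐧(Δ^{(r)}_{𝐦Δ})`, computed at resolution `k ≥ r`. -/
def localCoeffAt {d : ℕ} (τ : ℕ → (Fin d → ℕ) → ℂ) (n : Fin d → ℕ)
    (r : ℕ) (mΔ : Fin d → ℕ) (k : ℕ) : ℂ :=
  ∑ m ∈ (boxLt (fun _ : Fin d => 2 ^ k)).filter
      (fun m => dyadicCube k m ⊆ dyadicCube r mΔ),
    (walshValD k n m : ℂ) * τ k m

/-- The support of a quasimeasure: the complement of the union of all dyadic cubes `Δ₀`
such that `τ(Δ) = 0` for every dyadic cube `Δ ⊆ Δ₀`. -/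
def qmSupport {d : ℕ} (τ : ℕ → (Fin d → ℕ) → ℂ) : Set (GD d) :=
  (⋃ k, ⋃ m ∈ box d k,
    ⋃ (_ : ∀ k' m', (∀ l, m' l < 2 ^ k') →
        dyadicCube k' m' ⊆ dyadicCube k m → τ k' m' = 0),
    dyadicCube k m)ᶜ

/-- The restriction `τ|_{Δ̃}` of a quasimeasure to the dyadic cube `Δ̃ = Δ^{(r)}_{𝐦Δ}`:
`τ|_{Δ̃}(Δ) = τ(Δ̃ ∩ Δ)` (two dyadic cubes are nested or disjoint). -/
def restrictQM {d : ℕ} (τ : ℕ → (Fin d → ℕ) → ℂ) (r : ℕ) (mΔ : Fin d → ℕ) :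
    ℕ → (Fin d → ℕ) → ℂ := fun k m =>
  if dyadicCube k m ⊆ dyadicCube (d := d) r mΔ then τ k m
  else if dyadicCube (d := d) r mΔ ⊆ dyadicCube k m then τ r mΔ
  else 0

/-- `τ` is the canonical quasimeasure `τ_E` associated with a (nonempty closed) set `E`:
`τ(𝔾^d) = 1`; `τ(Δ) = 0` iff `Δ ∩ E = ∅`; and the mass of a cube meeting `E` is divided
equally among its `2^d` immediate subcubes that meet `E`. -/
def IsTauOf {d : ℕ} (E : Set (GD d)) (τ : ℕ → (Fin d → ℕ) → ℂ) : Prop :=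
  IsQuasimeasure τ ∧
  τ 0 (fun _ => 0) = 1 ∧
  (∀ k m, (∀ l, m l < 2 ^ k) → (τ k m = 0 ↔ dyadicCube k m ∩ E = ∅)) ∧
  (∀ k m, (∀ l, m l < 2 ^ k) → (dyadicCube k m ∩ E).Nonempty →
    ∀ σ : Fin d → Fin 2,
      τ (k + 1) (fun l => 2 * m l + (σ l : ℕ)) =
        if (dyadicCube (k + 1) (fun l => 2 * m l + (σ l : ℕ)) ∩ E).Nonempty then
          τ k m / ((Finset.univ.filter fun σ' : Fin d → Fin 2 =>
              (dyadicCube (k + 1) (fun l => 2 * m l + (σ' l : ℕ)) ∩ E).Nonempty).card : ℂ)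
        else 0)

/-- The sequence `m_s`: `m_1 = 0`, `m_{s+1} = 2(2m_s+1)` (value at `0` is junk). -/
def mSeq : ℕ → ℕ
  | 0 => 0
  | s + 1 => if s = 0 then 0 else 2 * (2 * mSeq s + 1)

/-- The layer `F_s^π`. -/
def Fspi {d : ℕ} (π : ℕ → (Fin d → ℕ) → Fin d → ℕ) (s : ℕ) : Set (GD d) :=
  ⋃ m ∈ box d (mSeq s), ⋃ m' ∈ box d (mSeq s),
    {g | g ∈ dyadicCube (2 * mSeq s) (fun l => 2 ^ mSeq s * m l + m' l) ∧
      walshD (fun _ => 2 ^ (2 * mSeq s)) g = walshValD (mSeq s) (π s m) m'}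

/-- `F̃_s^π = F_1^π ∩ ⋯ ∩ F_s^π` (so `F̃_0^π = 𝔾^d`). -/
def Ftil {d : ℕ} (π : ℕ → (Fin d → ℕ) → Fin d → ℕ) (s : ℕ) : Set (GD d) :=
  ⋂ k ∈ Finset.Icc 1 s, Fspi π k

/-- `F^π = ⋂_{s≥1} F_s^π`. -/
def Fpi {d : ℕ} (π : ℕ → (Fin d → ℕ) → Fin d → ℕ) : Set (GD d) :=
  ⋂ s ∈ Set.Ici 1, Fspi π s

/-- The identity element of `S` (yielding `F_s`, `F̃_s` and `F` themselves). -/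
def idPerm (d : ℕ) : ℕ → (Fin d → ℕ) → Fin d → ℕ := fun _ m => m

/-- `S`: sequences `π = (π_s)` of permutations of the boxes `{0,…,2^{m_s}−1}^d`. -/
structure PermSeq (d : ℕ) where
  p : ℕ → Equiv.Perm (Fin d → ℕ)
  maps : ∀ s, Set.MapsTo (p s) (box d (mSeq s)) (box d (mSeq s))

/-- The underlying sequence of functions of an element of `S`. -/
def PermSeq.f {d : ℕ} (π : PermSeq d) : ℕ → (Fin d → ℕ) → Fin d → ℕ := fun s => ⇑(π.p s)

/-- `π ∈ S'`: every `π_s` acts coordinatewise, `π_s(𝐦) = (π_s^1(m^1),…,π_s^d(m^d))`. -/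
def PermSeq.Coordinatewise {d : ℕ} (π : PermSeq d) : Prop :=
  ∀ s, ∃ e : Fin d → ℕ → ℕ, ∀ m : Fin d → ℕ, π.p s m = fun l => e l (m l)

/-- The Dirichlet kernel `D_N = ∑_{n<N} W_n` of the one-dimensional Walsh system. -/
def dirichlet (N : ℕ) (g : DyadicGroup) : ℝ :=
  ∑ n ∈ Finset.range N, walsh n g
lemma walsh_two_pow (K : ℕ) (g : DyadicGroup) :
    walsh (2 ^ K) g = if g K = 1 then (-1 : ℝ) else 1 := by
  unfold walsh
  rw [Finset.prod_eq_single K]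
  · simp [Nat.testBit_two_pow_self]
  · intro k hk hne
    simp [Nat.testBit_two_pow_of_ne (fun h => hne h.symm)]
  · intro h
    exact absurd (Finset.mem_range.mpr (Nat.lt_two_pow_self (n := K))) h

lemma walsh_pm (n : ℕ) (g : DyadicGroup) : walsh n g = 1 ∨ walsh n g = -1 := by
  unfold walsh
  refine Finset.prod_induction _ (fun x => x = 1 ∨ x = -1) ?_ (Or.inl rfl) ?_
  · rintro a b (ha | ha) (hb | hb) <;> simp [ha, hb]
  · intro k _; split <;> simp

lemma walshD_pm {d : ℕ} (n : Fin d → ℕ) (g : GD d) :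
    walshD n g = 1 ∨ walshD n g = -1 := by
  unfold walshD
  refine Finset.prod_induction _ (fun x => x = 1 ∨ x = -1) ?_ (Or.inl rfl) ?_
  · rintro a b (ha | ha) (hb | hb) <;> simp [ha, hb]
  · intro l _; exact walsh_pm _ _

lemma walshD_two_pow {d : ℕ} (K : ℕ) (g : GD d) :
    walshD (fun _ => 2 ^ K) g = ∏ l, (if g l K = 1 then (-1 : ℝ) else 1) := by
  unfold walshD
  exact Finset.prod_congr rfl fun l _ => walsh_two_pow K (g l)

/-- existence: every point is in the dyadic interval indexed by some m < 2^k -/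
lemma exists_mem_dyadicInterval (k : ℕ) (x : DyadicGroup) :
    ∃ m < 2 ^ k, x ∈ dyadicInterval k m := by
  induction k with
  | zero => exact ⟨0, by norm_num, fun t ht => absurd ht (Nat.not_lt_zero t)⟩
  | succ k ih =>
    obtain ⟨m, hm, hx⟩ := ih
    refine ⟨2 * m + (x k).val, ?_, ?_⟩
    · have := (x k).val_lt; omega
    · intro t ht
      have hv : (x k).val < 2 := ZMod.val_lt _
      rcases Nat.lt_succ_iff_lt_or_eq.mp ht with ht' | rfl
      · have h1 : k + 1 - 1 - t = (k - 1 - t) + 1 := by omega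
        have h2 : (2 * m + (x k).val) / 2 = m := by omega
        rw [h1, Nat.testBit_succ, h2]
        exact hx t ht'
      · have h1 : t + 1 - 1 - t = 0 := by omega
        rw [h1, Nat.testBit_zero]
        have hzm : ∀ y : ZMod 2, y = 0 ∨ y = 1 := by decide
        rcases hzm (x t) with h | h
        · rw [h]; simp [show (0 : ZMod 2).val = 0 from rfl, Nat.mul_add_mod]
        · rw [h]; simp [show (1 : ZMod 2).val = 1 from rfl, Nat.mul_add_mod]

lemma dyadicInterval_unique {k m m' : ℕ} (hm : m < 2 ^ k) (hm' : m' < 2 ^ k)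
    {x : DyadicGroup} (h1 : x ∈ dyadicInterval k m) (h2 : x ∈ dyadicInterval k m') :
    m = m' := by
  apply Nat.eq_of_testBit_eq
  intro j
  by_cases hj : j < k
  · have ht : k - 1 - j < k := by omega
    have hkt : k - 1 - (k - 1 - j) = j := by omega
    have e1 := h1 (k - 1 - j) ht
    have e2 := h2 (k - 1 - j) ht
    rw [hkt] at e1 e2
    by_cases hb : m.testBit j <;> by_cases hb' : m'.testBit j <;>
      simp [hb, hb'] at e1 e2 ⊢ <;> rw [e1] at e2 <;> exact absurd e2 (by decide)
  · rw [Nat.testBit_lt_two_pow (lt_of_lt_of_le hm (Nat.pow_le_pow_right (by norm_num) (by omega))),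
      Nat.testBit_lt_two_pow (lt_of_lt_of_le hm' (Nat.pow_le_pow_right (by norm_num) (by omega)))]

lemma exists_mem_dyadicCube {d : ℕ} (k : ℕ) (g : GD d) :
    ∃ m : Fin d → ℕ, (∀ l, m l < 2 ^ k) ∧ g ∈ dyadicCube k m := by
  choose m hm hmem using fun l => exists_mem_dyadicInterval k (g l)
  exact ⟨m, hm, hmem⟩

lemma dyadicCube_unique {d : ℕ} {k : ℕ} {m m' : Fin d → ℕ}
    (hm : ∀ l, m l < 2 ^ k) (hm' : ∀ l, m' l < 2 ^ k) {g : GD d}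
    (h1 : g ∈ dyadicCube k m) (h2 : g ∈ dyadicCube k m') : m = m' :=
  funext fun l => dyadicInterval_unique (hm l) (hm' l) (h1 l) (h2 l)

lemma dyadicCube_congr {d : ℕ} {k : ℕ} {M : Fin d → ℕ} {g g' : GD d}
    (h : ∀ l, ∀ t < k, g l t = g' l t) :
    g ∈ dyadicCube k M ↔ g' ∈ dyadicCube k M := by
  constructor <;> intro hm l t ht
  · rw [← h l t ht]; exact hm l t ht
  · rw [h l t ht]; exact hm l t ht

/-- The flip element: 1 at coordinate `(0, K)`, zero elsewhere. -/
def flipE (d K : ℕ) : GD d := fun l t => if l.val = 0 ∧ t = K then 1 else 0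

lemma flipE_apply_ne {d K : ℕ} (l : Fin d) {t : ℕ} (ht : t ≠ K) (g : GD d) :
    (g + flipE d K) l t = g l t := by
  simp [flipE, Pi.add_apply, ht]

lemma zmod2_cases (x : ZMod 2) : x = 0 ∨ x = 1 := by revert x; decide

lemma walshD_two_pow_flip {d : ℕ} (hd : 0 < d) (K : ℕ) (g : GD d) :
    walshD (fun _ => 2 ^ K) (g + flipE d K) = - walshD (fun _ => 2 ^ K) g := by
  rw [walshD_two_pow, walshD_two_pow]
  set i0 : Fin d := ⟨0, hd⟩ with hi0
  rw [← Finset.mul_prod_erase Finset.univ _ (Finset.mem_univ i0),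
    ← Finset.mul_prod_erase Finset.univ
      (fun l => if g l K = 1 then (-1:ℝ) else 1) (Finset.mem_univ i0)]
  have h1 : ((g + flipE d K) i0 K) = g i0 K + 1 := by
    simp [flipE, Pi.add_apply, hi0]
  have h2 : ∀ l ∈ Finset.univ.erase i0,
      (if (g + flipE d K) l K = 1 then (-1:ℝ) else 1) = (if g l K = 1 then (-1:ℝ) else 1) := by
    intro l hl
    have hne : l.val ≠ 0 := by
      intro h
      exact (Finset.mem_erase.mp hl).1 (Fin.ext h)
    simp [flipE, Pi.add_apply, hne]
  rw [Finset.prod_congr rfl h2, h1]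
  rcases zmod2_cases (g i0 K) with h | h <;> simp [h]

lemma mem_box {d k : ℕ} {m : Fin d → ℕ} : m ∈ box d k ↔ ∀ l, m l < 2 ^ k := Iff.rfl

lemma mem_Fspi_iff {d : ℕ} (π : ℕ → (Fin d → ℕ) → Fin d → ℕ) (s : ℕ) (g : GD d) :
    g ∈ Fspi π s ↔ ∃ m m' : Fin d → ℕ, (∀ l, m l < 2 ^ mSeq s) ∧ (∀ l, m' l < 2 ^ mSeq s) ∧
      g ∈ dyadicCube (2 * mSeq s) (fun l => 2 ^ mSeq s * m l + m' l) ∧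
      walshD (fun _ => 2 ^ (2 * mSeq s)) g = walshValD (mSeq s) (π s m) m' := by
  simp only [Fspi, Set.mem_iUnion, Set.mem_setOf_eq, mem_box, exists_prop]
  tauto

lemma mem_Fspi_congr {d : ℕ} (π : ℕ → (Fin d → ℕ) → Fin d → ℕ) (s : ℕ) {g g' : GD d}
    (h : ∀ l, ∀ t ≤ 2 * mSeq s, g l t = g' l t) :
    g ∈ Fspi π s ↔ g' ∈ Fspi π s := by
  rw [mem_Fspi_iff, mem_Fspi_iff]
  have hw : walshD (fun _ => 2 ^ (2 * mSeq s)) g = walshD (fun _ => 2 ^ (2 * mSeq s)) g' := by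
    rw [walshD_two_pow, walshD_two_pow]
    exact Finset.prod_congr rfl fun l _ => by rw [h l (2 * mSeq s) le_rfl]
  have hc : ∀ M : Fin d → ℕ, g ∈ dyadicCube (2 * mSeq s) M ↔ g' ∈ dyadicCube (2 * mSeq s) M :=
    fun M => dyadicCube_congr fun l t ht => h l t (le_of_lt ht)
  constructor <;> rintro ⟨m, m', hm, hm', hcube, heq⟩
  · exact ⟨m, m', hm, hm', (hc _).mp hcube, hw ▸ heq⟩
  · exact ⟨m, m', hm, hm', (hc _).mpr hcube, hw.symm ▸ heq⟩

/-- every `g` lies in some cube of the special form used in `Fspi`. -/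
lemma exists_pair (k : ℕ) {d : ℕ} (g : GD d) :
    ∃ m m' : Fin d → ℕ, (∀ l, m l < 2 ^ k) ∧ (∀ l, m' l < 2 ^ k) ∧
      g ∈ dyadicCube (2 * k) (fun l => 2 ^ k * m l + m' l) := by
  obtain ⟨M, hM, hmem⟩ := exists_mem_dyadicCube (2 * k) g
  refine ⟨fun l => M l / 2 ^ k, fun l => M l % 2 ^ k, ?_, ?_, ?_⟩
  · intro l
    have : M l < 2 ^ k * 2 ^ k := by
      rw [← pow_add]; rw [show k + k = 2 * k by omega]; exact hM l
    exact Nat.div_lt_of_lt_mul (by rwa [mul_comm] at this)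
  · intro l; exact Nat.mod_lt _ (Nat.two_pow_pos k)
  · have : (fun l => 2 ^ k * (M l / 2 ^ k) + M l % 2 ^ k) = M := by
      funext l; rw [Nat.div_add_mod]
    rwa [this]

lemma split_unique {k a b a' b' : ℕ} (hb : b < 2 ^ k) (hb' : b' < 2 ^ k)
    (h : 2 ^ k * a + b = 2 ^ k * a' + b') : a = a' ∧ b = b' := by
  have hp : 0 < 2 ^ k := Nat.two_pow_pos _
  have d1 : (2 ^ k * a + b) / 2 ^ k = a := by rw [Nat.mul_add_div hp, Nat.div_eq_of_lt hb, Nat.add_zero]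
  have d2 : (2 ^ k * a' + b') / 2 ^ k = a' := by rw [Nat.mul_add_div hp, Nat.div_eq_of_lt hb', Nat.add_zero]
  have haa : a = a' := by rw [← d1, ← d2, h]
  subst haa
  exact ⟨rfl, by omega⟩

lemma lt_two_pow_double {k a b : ℕ} (ha : a < 2 ^ k) (hb : b < 2 ^ k) :
    2 ^ k * a + b < 2 ^ (2 * k) := by
  have : 2 ^ (2 * k) = 2 ^ k * 2 ^ k := by rw [← pow_add]; congr 1; omega
  rw [this]
  have h3 : 2 ^ k * a + 2 ^ k ≤ 2 ^ k * 2 ^ k := by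
    have := Nat.mul_le_mul (le_refl (2 ^ k)) (Nat.succ_le_of_lt ha)
    rwa [Nat.mul_succ] at this
  omega

/-- the pair `(m, m')` is unique. -/
lemma pair_unique {k d : ℕ} {m m' n n' : Fin d → ℕ}
    (hm : ∀ l, m l < 2 ^ k) (hm' : ∀ l, m' l < 2 ^ k)
    (hn : ∀ l, n l < 2 ^ k) (hn' : ∀ l, n' l < 2 ^ k) {g : GD d}
    (h1 : g ∈ dyadicCube (2 * k) (fun l => 2 ^ k * m l + m' l))
    (h2 : g ∈ dyadicCube (2 * k) (fun l => 2 ^ k * n l + n' l)) :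
    m = n ∧ m' = n' := by
  have key := dyadicCube_unique (fun l => lt_two_pow_double (hm l) (hm' l))
    (fun l => lt_two_pow_double (hn l) (hn' l)) h1 h2
  constructor <;> funext l <;> have hl : 2 ^ k * m l + m' l = 2 ^ k * n l + n' l := congrFun key l
  · exact (split_unique (hm' l) (hn' l) hl).1
  · exact (split_unique (hm' l) (hn' l) hl).2

lemma neg_pm_iff {v c : ℝ} (hv : v = 1 ∨ v = -1) (hc : c = 1 ∨ c = -1) :
    -v = c ↔ ¬(v = c) := by
  rcases hv with h | h <;> rcases hc with h' | h' <;> subst h <;> subst h' <;> norm_num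

lemma walshValD_pm {d : ℕ} (k : ℕ) (n m : Fin d → ℕ) :
    walshValD k n m = 1 ∨ walshValD k n m = -1 := walshD_pm _ _

lemma flip_mem_Fspi {d : ℕ} (hd : 0 < d) (π : ℕ → (Fin d → ℕ) → Fin d → ℕ) (s : ℕ) (g : GD d) :
    g + flipE d (2 * mSeq s) ∈ Fspi π s ↔ g ∉ Fspi π s := by
  have hcube : ∀ M : Fin d → ℕ,
      g + flipE d (2 * mSeq s) ∈ dyadicCube (2 * mSeq s) M ↔ g ∈ dyadicCube (2 * mSeq s) M :=
    fun M => dyadicCube_congr fun l t ht => flipE_apply_ne l (by omega) g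
  have hw := walshD_two_pow_flip hd (2 * mSeq s) g
  constructor
  · rintro h hg
    rw [mem_Fspi_iff] at h hg
    obtain ⟨m1, m1', hm1, hm1', hc1, he1⟩ := h
    obtain ⟨m2, m2', hm2, hm2', hc2, he2⟩ := hg
    obtain ⟨rfl, rfl⟩ := pair_unique hm1 hm1' hm2 hm2' ((hcube _).mp hc1) hc2
    rw [hw] at he1
    rw [← he2] at he1
    rcases walshD_pm (fun _ => 2 ^ (2 * mSeq s)) g with h | h <;> rw [h] at he1 <;> norm_num at he1
  · intro hg
    rw [mem_Fspi_iff]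
    obtain ⟨m, m', hm, hm', hc⟩ := exists_pair (mSeq s) g
    refine ⟨m, m', hm, hm', (hcube _).mpr hc, ?_⟩
    rw [hw]
    rw [neg_pm_iff (walshD_pm _ _) (walshValD_pm _ _ _)]
    intro heq
    exact hg ((mem_Fspi_iff π s g).mpr ⟨m, m', hm, hm', hc, heq⟩)

lemma mSeq_succ (s : ℕ) (hs : 1 ≤ s) : mSeq (s + 1) = 2 * (2 * mSeq s + 1) := by
  rw [mSeq]
  simp [Nat.one_le_iff_ne_zero.mp hs]

lemma mSeq_lt {k s : ℕ} (hk : 1 ≤ k) (hks : k < s) : mSeq k < mSeq s := by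
  induction s with
  | zero => omega
  | succ s ih =>
    have hs1 : 1 ≤ s := by omega
    have hstep : mSeq s < mSeq (s + 1) := by rw [mSeq_succ s hs1]; omega
    rcases Nat.lt_succ_iff_lt_or_eq.mp hks with h | h
    · exact lt_trans (ih h) hstep
    · subst h; exact hstep

section Meas
variable {d : ℕ}

lemma measurable_eval (l : Fin d) (t : ℕ) : Measurable fun g : GD d => g l t := by
  have h1 : Measurable fun x : DyadicGroup => x t := (continuous_apply t).measurable
  exact h1.comp (measurable_pi_apply l)

lemma measurableSet_coord (l : Fin d) (t : ℕ) (v : ZMod 2) :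
    MeasurableSet {g : GD d | g l t = v} :=
  measurable_eval l t (measurableSet_singleton v)

lemma measurable_walsh_comp (n : ℕ) (l : Fin d) : Measurable fun g : GD d => walsh n (g l) := by
  unfold walsh
  apply Finset.measurable_prod
  intro k _
  by_cases hb : n.testBit k
  · have : (fun g : GD d => if n.testBit k ∧ g l k = 1 then (-1:ℝ) else 1) =
        fun g => if g l k = 1 then (-1:ℝ) else 1 := by
      funext g; simp [hb]
    rw [this]
    exact Measurable.ite (measurableSet_coord l k 1) measurable_const measurable_const
  · have : (fun g : GD d => if n.testBit k ∧ g l k = 1 then (-1:ℝ) else 1) = fun _ => 1 := by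
      funext g; simp [hb]
    rw [this]
    exact measurable_const

lemma measurable_walshD (n : Fin d → ℕ) : Measurable (walshD n : GD d → ℝ) :=
  Finset.measurable_prod _ fun l _ => measurable_walsh_comp (n l) l

lemma measurableSet_dyadicCube (k : ℕ) (m : Fin d → ℕ) :
    MeasurableSet (dyadicCube k m) := by
  have : dyadicCube k m = ⋂ (l : Fin d), ⋂ (t : ℕ), ⋂ (_ : t < k),
      {g : GD d | g l t = if (m l).testBit (k - 1 - t) then 1 else 0} := by
    ext g; simp [dyadicCube, dyadicInterval]
  rw [this]
  exact MeasurableSet.iInter fun l => MeasurableSet.iInter fun t =>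
    MeasurableSet.iInter fun _ => measurableSet_coord l t _

lemma measurableSet_Fspi (π : ℕ → (Fin d → ℕ) → Fin d → ℕ) (s : ℕ) :
    MeasurableSet (Fspi π s) := by
  unfold Fspi
  refine MeasurableSet.biUnion (Set.to_countable _) fun m _ =>
    MeasurableSet.biUnion (Set.to_countable _) fun m' _ => ?_
  exact (measurableSet_dyadicCube _ _).inter
    ((measurable_walshD _) (measurableSet_singleton _))

lemma measurableSet_Ftil (π : ℕ → (Fin d → ℕ) → Fin d → ℕ) (s : ℕ) :
    MeasurableSet (Ftil π s) := by
  unfold Ftil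
  exact MeasurableSet.biInter ((Finset.Icc 1 s : Finset ℕ).countable_toSet)
    fun k _ => measurableSet_Fspi π k

end Meas

lemma Ftil_zero {d : ℕ} (π : ℕ → (Fin d → ℕ) → Fin d → ℕ) : Ftil π 0 = Set.univ := by
  unfold Ftil
  simp

lemma Ftil_succ {d : ℕ} (π : ℕ → (Fin d → ℕ) → Fin d → ℕ) (s : ℕ) :
    Ftil π (s + 1) = Ftil π s ∩ Fspi π (s + 1) := by
  ext g
  simp only [Ftil, Set.mem_iInter, Finset.mem_Icc, Set.mem_inter_iff]
  constructor
  · intro h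
    exact ⟨fun k hk => h k ⟨hk.1, by omega⟩, h (s + 1) ⟨by omega, le_rfl⟩⟩
  · rintro ⟨h1, h2⟩ k hk
    rcases eq_or_lt_of_le hk.2 with h | h
    · subst h; exact h2
    · exact h1 k ⟨hk.1, by omega⟩

lemma flip_mem_Ftil {d : ℕ} (π : ℕ → (Fin d → ℕ) → Fin d → ℕ) (s : ℕ) (g : GD d) :
    g + flipE d (2 * mSeq (s + 1)) ∈ Ftil π s ↔ g ∈ Ftil π s := by
  have key : ∀ k, 1 ≤ k → k ≤ s →
      (g + flipE d (2 * mSeq (s + 1)) ∈ Fspi π k ↔ g ∈ Fspi π k) := by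
    intro k h1 h2
    apply mem_Fspi_congr
    intro l t ht
    apply flipE_apply_ne
    have : mSeq k < mSeq (s + 1) := mSeq_lt h1 (by omega)
    omega
  simp only [Ftil, Set.mem_iInter, Finset.mem_Icc]
  constructor <;> intro h k hk
  · exact (key k hk.1 hk.2).mp (h k hk)
  · exact (key k hk.1 hk.2).mpr (h k hk)

lemma halve {d : ℕ} (hd : 0 < d) (μ : Measure (GD d)) [μ.IsAddHaarMeasure]
    (π : ℕ → (Fin d → ℕ) → Fin d → ℕ) (s : ℕ) (A : Set (GD d))
    (hAinv : ∀ g, g + flipE d (2 * mSeq s) ∈ A ↔ g ∈ A) :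
    μ (A ∩ Fspi π s) + μ (A ∩ Fspi π s) = μ A := by
  have hF := measurableSet_Fspi π s
  have h1 : μ (A ∩ Fspi π s) + μ (A \ Fspi π s) = μ A := measure_inter_add_diff A hF
  have h2 : (fun g => flipE d (2 * mSeq s) + g) ⁻¹' (A ∩ Fspi π s) = A \ Fspi π s := by
    ext g
    simp only [Set.mem_preimage, Set.mem_inter_iff, Set.mem_diff]
    rw [add_comm, hAinv g, flip_mem_Fspi hd π s g]
  have h3 : μ (A \ Fspi π s) = μ (A ∩ Fspi π s) := by
    rw [← h2, measure_preimage_add]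
  rw [h3] at h1
  exact h1

theorem statement8' (d : ℕ) (hd : 2 ≤ d)
    (μ : Measure (GD d)) [μ.IsAddHaarMeasure] (hμ : μ Set.univ = 1)
    (π : PermSeq d) :
    (∀ s : ℕ, 1 ≤ s → μ (Ftil π.f s) = (2 : ENNReal)⁻¹ ^ s) ∧
    μ (Fpi π.f) = 0 := by
  have hd0 : 0 < d := by omega
  have key : ∀ s : ℕ, μ (Ftil π.f s) = (2 : ENNReal)⁻¹ ^ s := by
    intro s
    induction s with
    | zero => rw [Ftil_zero]; simpa using hμ
    | succ s ih =>
      have h := halve hd0 μ π.f (s + 1) (Ftil π.f s) (fun g => flip_mem_Ftil π.f s g)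
      rw [← Ftil_succ, ih] at h
      have h2 : (2 : ENNReal) * μ (Ftil π.f (s + 1)) = 2 * (2 : ENNReal)⁻¹ ^ (s + 1) := by
        calc (2 : ENNReal) * μ (Ftil π.f (s + 1))
            = μ (Ftil π.f (s + 1)) + μ (Ftil π.f (s + 1)) := two_mul _
          _ = (2 : ENNReal)⁻¹ ^ s := h
          _ = 2 * (2 : ENNReal)⁻¹ ^ (s + 1) := by
              rw [pow_succ, mul_comm ((2 : ENNReal)⁻¹ ^ s), ← mul_assoc,
                ENNReal.mul_inv_cancel (by norm_num) (by norm_num), one_mul]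
      rw [← one_mul (μ (Ftil π.f (s + 1))),
        ← ENNReal.inv_mul_cancel (show (2 : ENNReal) ≠ 0 by norm_num)
          (show (2 : ENNReal) ≠ ⊤ by norm_num),
        mul_assoc, h2, ← mul_assoc,
        ENNReal.inv_mul_cancel (show (2 : ENNReal) ≠ 0 by norm_num)
          (show (2 : ENNReal) ≠ ⊤ by norm_num), one_mul]
  refine ⟨fun s _ => key s, ?_⟩
  have hsub : ∀ s : ℕ, μ (Fpi π.f) ≤ (2 : ENNReal)⁻¹ ^ s := by
    intro s
    cases s with
    | zero =>
      simpa using (measure_mono (Set.subset_univ _)).trans (le_of_eq hμ)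
    | succ s =>
      have hsub2 : Fpi π.f ⊆ Ftil π.f (s + 1) := by
        intro g hg
        simp only [Ftil, Set.mem_iInter, Finset.mem_Icc]
        intro k hk
        have hgk : ∀ r ∈ Set.Ici 1, g ∈ Fspi π.f r := Set.mem_iInter₂.mp hg
        exact hgk k hk.1
      calc μ (Fpi π.f) ≤ μ (Ftil π.f (s + 1)) := measure_mono hsub2
        _ = (2 : ENNReal)⁻¹ ^ (s + 1) := key (s + 1)
  have hlim : Tendsto (fun s : ℕ => (2 : ENNReal)⁻¹ ^ s) atTop (𝓝 0) :=
    ENNReal.tendsto_pow_atTop_nhds_zero_of_lt_one (by norm_num)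
  exact le_antisymm (ge_of_tendsto' hlim hsub) zero_le

/-- `μ(F̃_s^π) = 2^{−s}` for every `π ∈ S` and `s ≥ 1`, hence `μ(F^π) = 0`
(the identity case gives `μ(F̃_s) = 2^{−s}` and `μ(F) = 0`). -/
theorem statement8 (d : ℕ) (hd : 2 ≤ d)
    (μ : Measure (GD d)) [μ.IsAddHaarMeasure] (hμ : μ Set.univ = 1)
    (π : PermSeq d) :
    (∀ s : ℕ, 1 ≤ s → μ (Ftil π.f s) = (2 : ENNReal)⁻¹ ^ s) ∧
    μ (Fpi π.f) = 0 := by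
  exact statement8' d hd μ hμ π
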